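/- arXiv:2303.12608 — 2 statements merged into one kernel-verified Lean document; each statement's English description precedes it below -/
import Mathlib

section
/- (Cauchy–Binet formula for permanents) Let M be an n×m matrix over R and N an m×s (q̂,p̂)-Manin matrix over R (q̂ an m×m parametric matrix, p̂ an s×s parametric matrix) such that every entry of N commutes with every entry of M. Let I=(i_1,…,i_r) be any multi-index in {1,…,n} and K=(k_1≤…≤k_r) a non-decreasing multi-index in {1,…,s}. Then r̂per_{p̂}((MN)_{IK}) = ∑_J r̂per_{q̂}(M_{IJ}) · r̂per_{p̂}(N_{JK}), where the sum is over all non-decreasing multi-indices J of length r in {1,…,m}. -/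
open scoped BigOperators Classical

noncomputable section

/-- `ε(q̂, I, σ)`: the `q̂`-inversion sign associated to the multi-index `I` and `σ ∈ S_r`,
`ε(q̂,I,σ) = ∏_{s<t, σ(s)>σ(t)} (-q_{i_{σ(s)} i_{σ(t)}})`. -/
def manEps {n r : ℕ} (q : Matrix (Fin n) (Fin n) ℂ) (I : Fin r → Fin n)
    (σ : Equiv.Perm (Fin r)) : ℂ :=
  ∏ st ∈ Finset.univ.filter (fun st : Fin r × Fin r => st.1 < st.2 ∧ σ st.2 < σ st.1),
    (-q (I (σ st.1)) (I (σ st.2)))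

/-- `ε(q̂, I)` for a multi-index `I`: `0` if two entries coincide, and
`∏_{s<t, i_s>i_t}(-q_{i_s i_t})` otherwise. -/
def manEpsIdx {n r : ℕ} (q : Matrix (Fin n) (Fin n) ℂ) (I : Fin r → Fin n) : ℂ :=
  if Function.Injective I then
    ∏ st ∈ Finset.univ.filter (fun st : Fin r × Fin r => st.1 < st.2 ∧ I st.2 < I st.1),
      (-q (I st.1) (I st.2))
  else 0

/-- The column `q̂`-minor determinant
`cdet_{q̂}(M_{IJ}) = ∑_{σ∈S_r} ε(q̂,I,σ) M_{i_{σ(1)},j_1} ⋯ M_{i_{σ(r)},j_r}`. -/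
def cdet {R : Type*} [Ring R] [Algebra ℂ R] {n m r : ℕ} (q : Matrix (Fin n) (Fin n) ℂ)
    (M : Matrix (Fin n) (Fin m) R) (I : Fin r → Fin n) (J : Fin r → Fin m) : R :=
  ∑ σ : Equiv.Perm (Fin r),
    manEps q I σ • (List.ofFn fun a : Fin r => M (I (σ a)) (J a)).prod

/-- A parametric matrix: nonzero entries with `q_{ij} q_{ji} = 1` and `q_{ii} = 1`. -/
def IsParametric {n : ℕ} (q : Matrix (Fin n) (Fin n) ℂ) : Prop :=
  (∀ i j, q i j ≠ 0) ∧ (∀ i j, q i j * q j i = 1) ∧ ∀ i, q i i = 1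

/-- An `n×m` `(q̂, p̂)`-Manin matrix over `R`. -/
def IsManin {R : Type*} [Ring R] [Algebra ℂ R] {n m : ℕ} (q : Matrix (Fin n) (Fin n) ℂ)
    (p : Matrix (Fin m) (Fin m) ℂ) (M : Matrix (Fin n) (Fin m) R) : Prop :=
  (∀ (i j : Fin n) (k : Fin m), i < j → M i k * M j k = q j i • (M j k * M i k)) ∧
  ∀ (i j : Fin n) (k l : Fin m), i < j → k < l →
    M i k * M j l - (q j i * p k l) • (M j l * M i k) + p k l • (M i l * M j k)
      - q j i • (M j k * M i l) = 0

/-- `μ(p̂, J, σ) = ∏_{s<t, σ(s)>σ(t)} p_{j_{σ(t)} j_{σ(s)}}`. -/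
def manMu {s r : ℕ} (p : Matrix (Fin s) (Fin s) ℂ) (J : Fin r → Fin s)
    (σ : Equiv.Perm (Fin r)) : ℂ :=
  ∏ st ∈ Finset.univ.filter (fun st : Fin r × Fin r => st.1 < st.2 ∧ σ st.2 < σ st.1),
    p (J (σ st.2)) (J (σ st.1))

/-- `v(J) = ∏_a m_a!` where `m_a` is the number of occurrences of `a` in `J`. -/
def vmult {s r : ℕ} (J : Fin r → Fin s) : ℕ :=
  ∏ a : Fin s, (Finset.univ.filter fun b : Fin r => J b = a).card.factorial

/-- The normalized row `p̂`-permanent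
`r̂per_{p̂}(M_{IJ}) = v(J)⁻¹ ∑_{σ∈S_r} μ(p̂,J,σ) M_{i_1,j_{σ(1)}} ⋯ M_{i_r,j_{σ(r)}}`. -/
def rnper {R : Type*} [Ring R] [Algebra ℂ R] {n s r : ℕ} (p : Matrix (Fin s) (Fin s) ℂ)
    (M : Matrix (Fin n) (Fin s) R) (I : Fin r → Fin n) (J : Fin r → Fin s) : R :=
  ((vmult J : ℂ))⁻¹ • ∑ σ : Equiv.Perm (Fin r),
    manMu p J σ • (List.ofFn fun a : Fin r => M (I a) (J (σ a))).prod


open Finset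

section Lemmas
variable {R : Type*} [Ring R] [Algebra ℂ R]

/-- The inversion set of a permutation, as a finset of pairs. -/
def InvF {r : ℕ} (σ : Equiv.Perm (Fin r)) : Finset (Fin r × Fin r) :=
  Finset.univ.filter fun st : Fin r × Fin r => st.1 < st.2 ∧ σ st.2 < σ st.1

lemma swap_adj_lt {r : ℕ} {b c x y : Fin r} (hbc : (b:ℕ)+1 = (c:ℕ))
    (hxy : x < y) (hne : ¬(x = b ∧ y = c)) :
    Equiv.swap b c x < Equiv.swap b c y := by
  push_neg at hne
  by_cases hxb : x = b
  · subst hxb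
    have hyc : y ≠ c := hne rfl
    have hyb : y ≠ x := hxy.ne'
    rw [Equiv.swap_apply_left, Equiv.swap_apply_of_ne_of_ne hyb hyc]
    rw [Fin.lt_iff_val_lt_val] at hxy ⊢
    have h1 : (y:ℕ) ≠ (c:ℕ) := fun h => hyc (Fin.ext h)
    omega
  · by_cases hxc : x = c
    · subst hxc
      have hyb : y ≠ b := by
        intro h; subst h
        rw [Fin.lt_iff_val_lt_val] at hxy; omega
      have hyc : y ≠ x := hxy.ne'
      rw [Equiv.swap_apply_right, Equiv.swap_apply_of_ne_of_ne hyb hyc]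
      rw [Fin.lt_iff_val_lt_val] at hxy ⊢
      omega
    · rw [Equiv.swap_apply_of_ne_of_ne hxb hxc]
      by_cases hyb : y = b
      · subst hyb
        rw [Equiv.swap_apply_left, Fin.lt_iff_val_lt_val] at *
        omega
      · by_cases hyc : y = c
        · subst hyc
          have hxb' : (x:ℕ) ≠ (b:ℕ) := fun h => hxb (Fin.ext h)
          rw [Equiv.swap_apply_right, Fin.lt_iff_val_lt_val] at *
          omega
        · rw [Equiv.swap_apply_of_ne_of_ne hyb hyc]
          exact hxy

lemma swap_pair_inj {r : ℕ} (b c : Fin r) :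
    Function.Injective (fun st : Fin r × Fin r => (Equiv.swap b c st.1, Equiv.swap b c st.2)) := by
  intro u v h
  simp only [Prod.mk.injEq] at h
  exact Prod.ext ((Equiv.swap b c).injective h.1) ((Equiv.swap b c).injective h.2)

lemma invF_mul_swap {r : ℕ} (σ : Equiv.Perm (Fin r)) {b c : Fin r}
    (hbc : (b:ℕ)+1 = (c:ℕ)) (hσ : σ b < σ c) :
    InvF (σ * Equiv.swap b c)
      = insert (b, c) ((InvF σ).image fun st => (Equiv.swap b c st.1, Equiv.swap b c st.2)) := by
  have hbc' : b < c := by rw [Fin.lt_def]; omega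
  ext ⟨x, y⟩
  simp only [InvF, Finset.mem_filter, Finset.mem_insert, Finset.mem_image, Finset.mem_univ, true_and]
  simp only [InvF, Finset.mem_insert, Finset.mem_image, Finset.mem_filter, Finset.mem_univ,
    true_and, Equiv.Perm.mul_apply, Prod.mk.injEq, Prod.exists]
  constructor
  · rintro ⟨hxy, hlt⟩
    by_cases h : x = b ∧ y = c
    · exact Or.inl ⟨h.1, h.2⟩
    · refine Or.inr ⟨Equiv.swap b c x, Equiv.swap b c y, ⟨swap_adj_lt hbc hxy h, ?_⟩, by simp, by simp⟩
      simpa [Equiv.swap_apply_self] using hlt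
  · rintro (⟨rfl, rfl⟩ | ⟨u, v, ⟨huv, hlt⟩, rfl, rfl⟩)
    · exact ⟨hbc', by simpa [Equiv.swap_apply_left, Equiv.swap_apply_right] using hσ⟩
    · have hne : ¬(u = b ∧ v = c) := by
        rintro ⟨rfl, rfl⟩; exact absurd hσ (not_lt.mpr hlt.le)
      exact ⟨swap_adj_lt hbc huv hne, by simpa [Equiv.swap_apply_self] using hlt⟩

lemma not_mem_swap_image {r : ℕ} (σ : Equiv.Perm (Fin r)) {b c : Fin r}
    (hbc : (b:ℕ)+1 = (c:ℕ)) :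
    (b, c) ∉ (InvF σ).image fun st => (Equiv.swap b c st.1, Equiv.swap b c st.2) := by
  simp only [Finset.mem_image, InvF, Finset.mem_filter, Finset.mem_univ, true_and, Prod.mk.injEq,
    Prod.exists, not_exists]
  rintro u v ⟨⟨huv, _⟩, h1, h2⟩
  have hu : u = c := (Equiv.swap b c).injective (by simp [h1, Equiv.swap_apply_left])
  have hv : v = b := (Equiv.swap b c).injective (by simp [h2, Equiv.swap_apply_right])
  rw [hu, hv, Fin.lt_def] at huv; omega

lemma manMu_eq_prod_invF {s r : ℕ} (p : Matrix (Fin s) (Fin s) ℂ) (J : Fin r → Fin s)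
    (σ : Equiv.Perm (Fin r)) :
    manMu p J σ = ∏ st ∈ InvF σ, p (J (σ st.2)) (J (σ st.1)) := rfl

lemma manMu_mul_swap {s r : ℕ} (p : Matrix (Fin s) (Fin s) ℂ) (J : Fin r → Fin s)
    (σ : Equiv.Perm (Fin r)) {b c : Fin r} (hbc : (b:ℕ)+1 = (c:ℕ)) (hσ : σ b < σ c) :
    manMu p J (σ * Equiv.swap b c) = p (J (σ b)) (J (σ c)) * manMu p J σ := by
  rw [manMu_eq_prod_invF, manMu_eq_prod_invF, invF_mul_swap σ hbc hσ,
    Finset.prod_insert (not_mem_swap_image σ hbc),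
    Finset.prod_image (fun u _ v _ h => swap_pair_inj b c h)]
  simp [Equiv.Perm.mul_apply, Equiv.swap_apply_self, Equiv.swap_apply_left, Equiv.swap_apply_right]

lemma card_invF_mul_swap {r : ℕ} (σ : Equiv.Perm (Fin r)) {b c : Fin r}
    (hbc : (b:ℕ)+1 = (c:ℕ)) (hσ : σ b < σ c) :
    (InvF (σ * Equiv.swap b c)).card = (InvF σ).card + 1 := by
  rw [invF_mul_swap σ hbc hσ, Finset.card_insert_of_notMem (not_mem_swap_image σ hbc),
    Finset.card_image_of_injective _ (swap_pair_inj b c)]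

end Lemmas
section ListLemmas
variable {R : Type*} [Ring R] [Algebra ℂ R]

lemma ofFn_take_congr {r : ℕ} (f g : Fin r → R) (t : ℕ)
    (h : ∀ a : Fin r, (a:ℕ) < t → f a = g a) :
    (List.ofFn f).take t = (List.ofFn g).take t := by
  apply List.ext_getElem
  · simp
  · intro i h1 h2
    have h1' : i < t ∧ i < r := by
      simpa only [List.length_take, List.length_ofFn, lt_min_iff] using h1
    simp only [List.getElem_take, List.getElem_ofFn]
    exact h ⟨i, h1'.2⟩ h1'.1

lemma ofFn_drop_congr {r : ℕ} (f g : Fin r → R) (t : ℕ)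
    (h : ∀ a : Fin r, t ≤ (a:ℕ) → f a = g a) :
    (List.ofFn f).drop t = (List.ofFn g).drop t := by
  apply List.ext_getElem
  · simp
  · intro i h1 h2
    have h1' : t + i < r := by
      simp only [List.length_drop, List.length_ofFn] at h1; omega
    simp only [List.getElem_drop, List.getElem_ofFn]
    exact h ⟨t + i, h1'⟩ (Nat.le_add_right t i)

lemma ofFn_prod_split {r : ℕ} (f : Fin r → R) (b c : Fin r) (hbc : (b:ℕ)+1 = (c:ℕ)) :
    (List.ofFn f).prod
      = ((List.ofFn f).take (b:ℕ)).prod * f b * f c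
          * ((List.ofFn f).drop ((c:ℕ)+1)).prod := by
  have hb : (b:ℕ) < (List.ofFn f).length := by simp [b.isLt]
  have hc : (c:ℕ) < (List.ofFn f).length := by simp [c.isLt]
  conv_lhs => rw [← List.prod_take_mul_prod_drop (List.ofFn f) (b:ℕ)]
  rw [List.drop_eq_getElem_cons hb, List.prod_cons,
    show (b:ℕ)+1 = (c:ℕ) from hbc, List.drop_eq_getElem_cons hc, List.prod_cons]
  simp only [List.getElem_ofFn, Fin.eta, mul_assoc]

lemma ofFn_prod_sum {r m' : ℕ} (f : Fin r → Fin m' → R) :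
    (List.ofFn fun a => ∑ j : Fin m', f a j).prod
      = ∑ J : Fin r → Fin m', (List.ofFn fun a => f a (J a)).prod := by
  induction r with
  | zero =>
      haveI : Unique (Fin 0 → Fin m') := ⟨⟨fun a => a.elim0⟩, fun _ => funext fun a => a.elim0⟩
      rw [Fintype.sum_unique]
      simp
  | succ r ih =>
      rw [List.ofFn_succ, List.prod_cons, ih (fun a j => f a.succ j), Finset.sum_mul_sum]
      rw [← Equiv.sum_comp (Fin.consEquiv (fun _ => Fin m'))
        (fun J => (List.ofFn fun a => f a (J a)).prod), Fintype.sum_prod_type]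
      apply Finset.sum_congr rfl; intro j _
      apply Finset.sum_congr rfl; intro J' _
      rw [List.ofFn_succ, List.prod_cons]
      simp [Fin.consEquiv, Fin.cons_zero, Fin.cons_succ]

lemma ofFn_prod_mul_comm {r : ℕ} (x y : Fin r → R)
    (h : ∀ a b, Commute (y a) (x b)) :
    (List.ofFn fun a => x a * y a).prod = (List.ofFn x).prod * (List.ofFn y).prod := by
  induction r with
  | zero => simp
  | succ r ih =>
      rw [List.ofFn_succ, List.ofFn_succ (f := x), List.ofFn_succ (f := y),
        List.prod_cons, List.prod_cons, List.prod_cons,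
        ih (fun a => x a.succ) (fun a => y a.succ) (fun a b => h _ _)]
      have hc : Commute (y 0) (List.ofFn fun a : Fin r => x a.succ).prod := by
        apply Commute.list_prod_right
        intro z hz
        rw [List.mem_ofFn] at hz
        obtain ⟨i, rfl⟩ := hz
        exact h 0 i.succ
      calc x 0 * y 0 * ((List.ofFn fun a : Fin r => x a.succ).prod
            * (List.ofFn fun a : Fin r => y a.succ).prod)
          = x 0 * (y 0 * (List.ofFn fun a : Fin r => x a.succ).prod)
            * (List.ofFn fun a : Fin r => y a.succ).prod := by rw [mul_assoc, mul_assoc, mul_assoc]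
        _ = x 0 * ((List.ofFn fun a : Fin r => x a.succ).prod * y 0)
            * (List.ofFn fun a : Fin r => y a.succ).prod := by rw [hc.eq]
        _ = x 0 * (List.ofFn fun a : Fin r => x a.succ).prod
            * (y 0 * (List.ofFn fun a : Fin r => y a.succ).prod) := by
              rw [mul_assoc, mul_assoc, mul_assoc]

end ListLemmas
section KeyLemmas
variable {R : Type*} [Ring R] [Algebra ℂ R]

lemma manin_key_lt {m s : ℕ} {q : Matrix (Fin m) (Fin m) ℂ} {p : Matrix (Fin s) (Fin s) ℂ}
    {N : Matrix (Fin m) (Fin s) R} (hq : IsParametric q) (hp : IsParametric p)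
    (hN : IsManin q p N) {i j : Fin m} (hij : i < j) (k l : Fin s) (hkl : k ≤ l) :
    N j k * N i l + p k l • (N j l * N i k)
      = q i j • (N i k * N j l + p k l • (N i l * N j k)) := by
  have hqq : q i j * q j i = 1 := hq.2.1 i j
  rcases hkl.lt_or_eq with hklt | rfl
  · have E := hN.2 i j k l hij hklt
    have h1 : N i k * N j l + p k l • (N i l * N j k)
        = (q j i * p k l) • (N j l * N i k) + q j i • (N j k * N i l) := by
      have h2 : (N i k * N j l + p k l • (N i l * N j k))
          - ((q j i * p k l) • (N j l * N i k) + q j i • (N j k * N i l))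
          = N i k * N j l - (q j i * p k l) • (N j l * N i k) + p k l • (N i l * N j k)
            - q j i • (N j k * N i l) := by abel
      exact sub_eq_zero.mp (h2.trans E)
    rw [h1, smul_add, smul_smul, smul_smul, ← mul_assoc, hqq, one_mul, one_smul]
    exact add_comm _ _
  · have E1 := hN.1 i j k hij
    rw [hp.2.2 k, one_smul, one_smul, E1, smul_add, smul_smul, hqq, one_smul]
lemma manin_key {m s : ℕ} {q : Matrix (Fin m) (Fin m) ℂ} {p : Matrix (Fin s) (Fin s) ℂ}
    {N : Matrix (Fin m) (Fin s) R} (hq : IsParametric q) (hp : IsParametric p)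
    (hN : IsManin q p N) (i j : Fin m) (k l : Fin s) (hkl : k ≤ l) :
    N j k * N i l + p k l • (N j l * N i k)
      = q i j • (N i k * N j l + p k l • (N i l * N j k)) := by
  rcases lt_trichotomy i j with hij | rfl | hji
  · exact manin_key_lt hq hp hN hij k l hkl
  · rw [hq.2.2, one_smul]
  · have H := manin_key_lt hq hp hN hji k l hkl
    have hqq : q i j * q j i = 1 := hq.2.1 i j
    rw [H, smul_smul, hqq, one_smul]

/-- unnormalized row permanent as a function of the row multi-index -/
def UQr {m s r : ℕ} (p : Matrix (Fin s) (Fin s) ℂ) (N : Matrix (Fin m) (Fin s) R)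
    (K : Fin r → Fin s) (J : Fin r → Fin m) : R :=
  ∑ σ : Equiv.Perm (Fin r), manMu p K σ • (List.ofFn fun a => N (J a) (K (σ a))).prod

end KeyLemmas

section Counting

lemma card_stab {m' r : ℕ} (J : Fin r → Fin m') :
    (Finset.univ.filter fun τ : Equiv.Perm (Fin r) => J ∘ τ = J).card = vmult J := by
  have h := DomMulAct.stabilizer_card (α := Fin r) (ι := Fin m') J
  rw [Fintype.card_subtype] at h
  rw [vmult, h]
  exact Finset.prod_congr rfl fun i _ => by rw [Fintype.card_subtype]

lemma card_fiber {m' r : ℕ} (J₀ J : Fin r → Fin m') (φ : Equiv.Perm (Fin r))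
    (hφ : J₀ ∘ φ = J) :
    (Finset.univ.filter fun τ : Equiv.Perm (Fin r) => J₀ ∘ τ = J).card = vmult J₀ := by
  rw [← card_stab J₀]
  apply Finset.card_bij' (fun τ _ => τ * φ⁻¹) (fun π _ => π * φ)
  · intro τ hτ
    rw [Finset.mem_filter] at hτ ⊢
    refine ⟨Finset.mem_univ _, ?_⟩
    funext a
    have h1 : J₀ (τ (φ⁻¹ a)) = J (φ⁻¹ a) := congrFun hτ.2 (φ⁻¹ a)
    have h2 : J (φ⁻¹ a) = J₀ a := by
      rw [← hφ]; simp [Function.comp]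
    simpa [Equiv.Perm.mul_apply] using h1.trans h2
  · intro π hπ
    rw [Finset.mem_filter] at hπ ⊢
    refine ⟨Finset.mem_univ _, ?_⟩
    funext a
    have h1 : J₀ (π (φ a)) = J₀ (φ a) := congrFun hπ.2 (φ a)
    have h2 : J₀ (φ a) = J a := congrFun hφ a
    simpa [Equiv.Perm.mul_apply] using h1.trans h2
  · intro τ _; rw [mul_assoc]; simp
  · intro π _; rw [mul_assoc]; simp

lemma orbit_eq {m' r : ℕ} (J₀ : Fin r → Fin m') (h₀ : Monotone J₀) :
    Finset.univ.image (fun τ : Equiv.Perm (Fin r) => J₀ ∘ τ)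
      = Finset.univ.filter (fun J : Fin r → Fin m' => J ∘ Tuple.sort J = J₀) := by
  ext J
  simp only [Finset.mem_image, Finset.mem_filter, Finset.mem_univ, true_and]
  constructor
  · rintro ⟨τ, rfl⟩
    rw [Tuple.comp_perm_comp_sort_eq_comp_sort,
      Tuple.sort_eq_refl_iff_monotone.mpr h₀]
    rfl
  · intro h
    refine ⟨(Tuple.sort J)⁻¹, ?_⟩
    funext a
    rw [← h]
    simp [Function.comp]

end Counting
section Swap
variable {R : Type*} [Ring R] [Algebra ℂ R]
variable {m s r : ℕ} {q : Matrix (Fin m) (Fin m) ℂ} {p : Matrix (Fin s) (Fin s) ℂ}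
  {N : Matrix (Fin m) (Fin s) R}

lemma pair_core (hq : IsParametric q) (hp : IsParametric p) (hN : IsManin q p N)
    {K : Fin r → Fin s} (hK : Monotone K) (J : Fin r → Fin m) {b c : Fin r}
    (hbc : (b:ℕ)+1 = (c:ℕ)) (σ : Equiv.Perm (Fin r)) (hσ : σ b < σ c) :
    (manMu p K σ • (List.ofFn fun a => N ((J ∘ Equiv.swap b c) a) (K (σ a))).prod
      - q (J b) (J c) • (manMu p K σ • (List.ofFn fun a => N (J a) (K (σ a))).prod))
    + (manMu p K (σ * Equiv.swap b c) •
        (List.ofFn fun a => N ((J ∘ Equiv.swap b c) a) (K ((σ * Equiv.swap b c) a))).prod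
      - q (J b) (J c) • (manMu p K (σ * Equiv.swap b c) •
        (List.ofFn fun a => N (J a) (K ((σ * Equiv.swap b c) a))).prod)) = 0 := by
  have hbne : b ≠ c := Fin.ne_of_val_ne (by omega)
  have hbcn : ∀ a : Fin r, (a:ℕ) < (b:ℕ) ∨ (c:ℕ) < (a:ℕ) → Equiv.swap b c a = a := by
    intro a ha
    exact Equiv.swap_apply_of_ne_of_ne (Fin.ne_of_val_ne (by omega)) (Fin.ne_of_val_ne (by omega))
  have hσs : ∀ a : Fin r, (a:ℕ) < (b:ℕ) ∨ (c:ℕ) < (a:ℕ) →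
      (σ * Equiv.swap b c) a = σ a := by
    intro a ha; rw [Equiv.Perm.mul_apply, hbcn a ha]
  set f2 : Fin r → R := fun a => N (J a) (K (σ a)) with hf2
  set A : R := ((List.ofFn f2).take (b:ℕ)).prod with hA
  set B : R := ((List.ofFn f2).drop ((c:ℕ)+1)).prod with hB
  set i := J b; set j := J c; set k := K (σ b); set l := K (σ c)
  have hkl : k ≤ l := hK hσ.le
  -- split the four products
  have split : ∀ f : Fin r → R, (∀ a : Fin r, (a:ℕ) < (b:ℕ) ∨ (c:ℕ) < (a:ℕ) → f a = f2 a) →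
      (List.ofFn f).prod = A * (f b * (f c * B)) := by
    intro f hf
    rw [ofFn_prod_split f b c hbc,
      ofFn_take_congr f f2 (b:ℕ) (fun a ha => hf a (Or.inl ha)),
      ofFn_drop_congr f f2 ((c:ℕ)+1) (fun a ha => hf a (Or.inr (by omega)))]
    rw [← hA, ← hB, mul_assoc, mul_assoc]
  have h1 : (List.ofFn fun a => N ((J ∘ Equiv.swap b c) a) (K (σ a))).prod
      = A * (N j k * (N i l * B)) := by
    rw [split _ (fun a ha => by simp only [Function.comp_apply, hbcn a ha]; rfl)]
    simp only [Function.comp_apply, Equiv.swap_apply_left, Equiv.swap_apply_right]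
    rfl
  have h2 : (List.ofFn fun a => N (J a) (K (σ a))).prod
      = A * (N i k * (N j l * B)) := by
    rw [split _ (fun a _ => rfl)]
  have h3 : (List.ofFn fun a => N ((J ∘ Equiv.swap b c) a) (K ((σ * Equiv.swap b c) a))).prod
      = A * (N j l * (N i k * B)) := by
    rw [split _ (fun a ha => by
      simp only [Function.comp_apply, hbcn a ha, hσs a ha]; rfl)]
    simp only [Function.comp_apply, Equiv.Perm.mul_apply, Equiv.swap_apply_left,
      Equiv.swap_apply_right]
    rfl
  have h4 : (List.ofFn fun a => N (J a) (K ((σ * Equiv.swap b c) a))).prod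
      = A * (N i l * (N j k * B)) := by
    rw [split _ (fun a ha => by simp only [hσs a ha]; rfl)]
    simp only [Equiv.Perm.mul_apply, Equiv.swap_apply_left, Equiv.swap_apply_right]
    rfl
  rw [h1, h2, h3, h4, manMu_mul_swap p K σ hbc hσ]
  have key := manin_key hq hp hN i j k l hkl
  have main : A * ((N j k * N i l + p k l • (N j l * N i k)) * B)
      = A * ((q i j • (N i k * N j l + p k l • (N i l * N j k))) * B) := by rw [key]
  have main' : A * (N j k * (N i l * B)) + p k l • (A * (N j l * (N i k * B)))
      = q i j • (A * (N i k * (N j l * B))) + (q i j * p k l) • (A * (N i l * (N j k * B))) := by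
    calc A * (N j k * (N i l * B)) + p k l • (A * (N j l * (N i k * B)))
        = A * ((N j k * N i l + p k l • (N j l * N i k)) * B) := by
          simp only [add_mul, mul_add, smul_mul_assoc, mul_smul_comm, mul_assoc]
      _ = A * ((q i j • (N i k * N j l + p k l • (N i l * N j k))) * B) := main
      _ = q i j • (A * (N i k * (N j l * B))) + (q i j * p k l) • (A * (N i l * (N j k * B))) := by
          simp only [smul_add, add_mul, mul_add, smul_mul_assoc, mul_smul_comm, mul_assoc,
            smul_smul]
  set μ := manMu p K σ
  set T1 := A * (N j k * (N i l * B))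
  set T2 := A * (N i k * (N j l * B))
  set T3 := A * (N j l * (N i k * B))
  set T4 := A * (N i l * (N j k * B))
  calc μ • T1 - q i j • (μ • T2) + ((p k l * μ) • T3 - q i j • ((p k l * μ) • T4))
      = μ • ((T1 + p k l • T3) - (q i j • T2 + (q i j * p k l) • T4)) := by
        module
    _ = 0 := by rw [main', sub_self, smul_zero]

lemma UQr_swap (hq : IsParametric q) (hp : IsParametric p) (hN : IsManin q p N)
    {K : Fin r → Fin s} (hK : Monotone K) (J : Fin r → Fin m) {b c : Fin r}
    (hbc : (b:ℕ)+1 = (c:ℕ)) :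
    UQr p N K (J ∘ Equiv.swap b c) = q (J b) (J c) • UQr p N K J := by
  have hbne : b ≠ c := Fin.ne_of_val_ne (by omega)
  rw [← sub_eq_zero]
  have hrw : UQr p N K (J ∘ Equiv.swap b c) - q (J b) (J c) • UQr p N K J
      = ∑ σ : Equiv.Perm (Fin r),
          (manMu p K σ • (List.ofFn fun a => N ((J ∘ Equiv.swap b c) a) (K (σ a))).prod
            - q (J b) (J c) • (manMu p K σ • (List.ofFn fun a => N (J a) (K (σ a))).prod)) := by
    rw [Finset.sum_sub_distrib, ← Finset.smul_sum]; rfl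
  rw [hrw]
  apply Finset.sum_ninvolution (g := fun σ => σ * Equiv.swap b c)
  · intro σ
    rcases lt_or_gt_of_ne (fun h : σ b = σ c => hbne (σ.injective h)) with h | h
    · exact pair_core hq hp hN hK J hbc σ h
    · have hσ' : (σ * Equiv.swap b c) b < (σ * Equiv.swap b c) c := by
        simpa [Equiv.Perm.mul_apply, Equiv.swap_apply_left, Equiv.swap_apply_right] using h
      have h2 := pair_core hq hp hN hK J hbc (σ * Equiv.swap b c) hσ'
      rw [show σ * Equiv.swap b c * Equiv.swap b c = σ from by
        rw [mul_assoc, Equiv.swap_mul_self, mul_one]] at h2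
      rw [add_comm]
      exact h2
  · intro σ _ h
    have h1 : σ * Equiv.swap b c = σ * 1 := by rw [mul_one]; exact h
    exact hbne (Equiv.swap_eq_one_iff.mp (mul_left_cancel h1))
  · intro σ; exact Finset.mem_univ _
  · intro σ; rw [mul_assoc, Equiv.swap_mul_self, mul_one]

lemma manMu_one {s' r' : ℕ} (p' : Matrix (Fin s') (Fin s') ℂ) (J : Fin r' → Fin s') :
    manMu p' J 1 = 1 := by
  rw [manMu]
  convert Finset.prod_empty
  ext st
  simp only [Finset.mem_filter, Finset.mem_univ, true_and]
  simp only [Finset.mem_filter, Finset.mem_univ, true_and, Finset.notMem_empty, iff_false,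
    not_and, Equiv.Perm.one_apply]
  exact fun h1 => not_lt.mpr h1.le

lemma UQr_perm (hq : IsParametric q) (hp : IsParametric p) (hN : IsManin q p N)
    {K : Fin r → Fin s} (hK : Monotone K) (J : Fin r → Fin m) (τ : Equiv.Perm (Fin r)) :
    UQr p N K (J ∘ τ) = manMu q J τ • UQr p N K J := by
  suffices H : ∀ (n : ℕ) (τ : Equiv.Perm (Fin r)), (InvF τ).card = n →
      UQr p N K (J ∘ τ) = manMu q J τ • UQr p N K J from H _ τ rfl
  intro n
  induction n using Nat.strong_induction_on with
  | _ n ih =>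
    intro τ hτ
    by_cases hdesc : ∃ b c : Fin r, (b:ℕ)+1 = (c:ℕ) ∧ τ c < τ b
    · obtain ⟨b, c, hbc, hlt⟩ := hdesc
      set τ' := τ * Equiv.swap b c with hτ'
      have hss : τ' * Equiv.swap b c = τ := by
        rw [hτ', mul_assoc, Equiv.swap_mul_self, mul_one]
      have hτ'b : τ' b < τ' c := by
        simpa [hτ', Equiv.Perm.mul_apply, Equiv.swap_apply_left, Equiv.swap_apply_right] using hlt
      have hcard : (InvF τ).card = (InvF τ').card + 1 := by
        rw [← hss]; exact card_invF_mul_swap τ' hbc hτ'b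
      have ih' := ih ((InvF τ').card) (by omega) τ' rfl
      have hcomp : J ∘ τ = (J ∘ τ') ∘ Equiv.swap b c := by
        funext a
        simp [hτ', Equiv.Perm.mul_apply, Equiv.swap_apply_self]
      calc UQr p N K (J ∘ τ) = UQr p N K ((J ∘ τ') ∘ Equiv.swap b c) := by rw [hcomp]
        _ = q ((J ∘ τ') b) ((J ∘ τ') c) • UQr p N K (J ∘ τ') :=
            UQr_swap hq hp hN hK (J ∘ τ') hbc
        _ = q (J (τ' b)) (J (τ' c)) • (manMu q J τ' • UQr p N K J) := by
            rw [ih']; rfl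
        _ = manMu q J τ • UQr p N K J := by
            rw [smul_smul, ← manMu_mul_swap q J τ' hbc hτ'b, hss]
    · push_neg at hdesc
      have hτ1 : τ = 1 := by
        have hmono : StrictMono τ := by
          cases r with
          | zero => intro a; exact a.elim0
          | succ r' =>
            rw [Fin.strictMono_iff_lt_succ]
            intro a
            have h1 : ((a.castSucc : Fin (r'+1)):ℕ) + 1 = ((a.succ : Fin (r'+1)):ℕ) := by simp
            have h2 := hdesc a.castSucc a.succ h1
            rcases lt_or_eq_of_le h2 with h | h
            · exact h
            · exact absurd (τ.injective h) (by simp [Fin.ext_iff])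
        haveI := Finite.to_wellFoundedLT (α := Fin r)
        have : (τ : Fin r → Fin r) = id := by
          apply (hmono.range_inj strictMono_id).mp
          rw [Set.range_id, Set.range_eq_univ.mpr τ.surjective]
        exact Equiv.ext fun a => congrFun this a
      rw [hτ1, manMu_one, one_smul]
      congr 1
end Swap
/-- Cauchy–Binet formula for normalized permanents: for `N` a `(q̂,p̂)`-Manin matrix whose
entries commute with those of `M`, any multi-index `I` and non-decreasing `K`,
`r̂per_{p̂}((MN)_{IK}) = ∑_J r̂per_{q̂}(M_{IJ}) r̂per_{p̂}(N_{JK})`, summed over all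
non-decreasing multi-indices `J` of length `r` in `{1,…,m}`. -/
theorem cauchy_binet_permanent {R : Type*} [Ring R] [Algebra ℂ R] {n m s r : ℕ}
    (q : Matrix (Fin m) (Fin m) ℂ) (p : Matrix (Fin s) (Fin s) ℂ)
    (hq : IsParametric q) (hp : IsParametric p)
    (M : Matrix (Fin n) (Fin m) R) (N : Matrix (Fin m) (Fin s) R)
    (hN : IsManin q p N)
    (hcomm : ∀ (i : Fin n) (j k : Fin m) (l : Fin s), Commute (M i j) (N k l))
    (I : Fin r → Fin n) (K : Fin r → Fin s) (hK : Monotone K) :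
    rnper p (M * N) I K
      = ∑ J : {J : Fin r → Fin m // Monotone J}, rnper q M I J.1 * rnper p N J.1 K := by
  classical
  set PM : (Fin r → Fin m) → R := fun J => (List.ofFn fun a => M (I a) (J a)).prod with hPM
  -- Step A : expand (M*N) entries
  have stepA : rnper p (M * N) I K
      = ((vmult K : ℂ))⁻¹ • ∑ J : Fin r → Fin m, PM J * UQr p N K J := by
    rw [rnper]
    congr 1
    have hσ : ∀ σ : Equiv.Perm (Fin r),
        (List.ofFn fun a => (M * N) (I a) (K (σ a))).prod
          = ∑ J : Fin r → Fin m, PM J * (List.ofFn fun a => N (J a) (K (σ a))).prod := by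
      intro σ
      have e1 : (List.ofFn fun a => (M * N) (I a) (K (σ a))).prod
          = (List.ofFn fun a => ∑ j : Fin m, M (I a) j * N j (K (σ a))).prod := by
        simp only [Matrix.mul_apply]
      rw [e1, ofFn_prod_sum (fun a j => M (I a) j * N j (K (σ a)))]
      exact Finset.sum_congr rfl fun J _ =>
        ofFn_prod_mul_comm (fun a => M (I a) (J a)) (fun a => N (J a) (K (σ a)))
          (fun a b' => (hcomm (I b') (J b') (J a) (K (σ a))).symm)
    rw [Finset.sum_congr rfl (fun σ _ => by rw [hσ σ, Finset.smul_sum]), Finset.sum_comm]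
    apply Finset.sum_congr rfl
    intro J _
    rw [UQr, Finset.mul_sum]
    exact Finset.sum_congr rfl fun σ _ => (mul_smul_comm _ _ _).symm
  -- Step B : group by sorted multi-index
  have hvJ : ∀ J : Fin r → Fin m, (vmult J : ℂ) ≠ 0 := by
    intro J
    refine Nat.cast_ne_zero.mpr ?_
    rw [vmult]
    exact Finset.prod_ne_zero_iff.mpr fun a _ => Nat.factorial_ne_zero _
  have stepB : ∑ J : Fin r → Fin m, PM J * UQr p N K J
      = ∑ J₀ : {J : Fin r → Fin m // Monotone J}, (vmult J₀.1 : ℂ)⁻¹ •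
          ∑ τ : Equiv.Perm (Fin r), PM (J₀.1 ∘ τ) * UQr p N K (J₀.1 ∘ τ) := by
    rw [← Finset.sum_fiberwise Finset.univ
      (fun J : Fin r → Fin m =>
        (⟨J ∘ Tuple.sort J, Tuple.monotone_sort J⟩ : {J : Fin r → Fin m // Monotone J}))
      (fun J => PM J * UQr p N K J)]
    apply Finset.sum_congr rfl
    intro J₀ _
    have horb : ∑ τ : Equiv.Perm (Fin r), PM (J₀.1 ∘ τ) * UQr p N K (J₀.1 ∘ τ)
        = ∑ J ∈ Finset.univ.filter (fun J => J ∘ Tuple.sort J = J₀.1),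
            (vmult J₀.1) • (PM J * UQr p N K J) := by
      rw [Finset.sum_comp (fun J => PM J * UQr p N K J)
        (fun τ : Equiv.Perm (Fin r) => J₀.1 ∘ τ), orbit_eq J₀.1 J₀.2]
      apply Finset.sum_congr rfl
      intro J hJ
      rw [Finset.mem_filter] at hJ
      congr 1
      exact card_fiber J₀.1 J ((Tuple.sort J)⁻¹)
        (by funext a; rw [← hJ.2]; simp [Function.comp])
    rw [horb, Finset.smul_sum]
    have hset : (Finset.univ.filter (fun J : Fin r → Fin m =>
          (⟨J ∘ Tuple.sort J, Tuple.monotone_sort J⟩ : {J : Fin r → Fin m // Monotone J}) = J₀))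
        = Finset.univ.filter (fun J : Fin r → Fin m => J ∘ Tuple.sort J = J₀.1) := by
      apply Finset.filter_congr
      intro J _
      simp [Subtype.ext_iff]
    rw [hset]
    apply Finset.sum_congr rfl
    intro J _
    rw [← Nat.cast_smul_eq_nsmul ℂ, smul_smul, inv_mul_cancel₀ (hvJ J₀.1), one_smul]
  -- Step C : pull the permanent of N out of the inner sum
  have stepC : ∀ J₀ : {J : Fin r → Fin m // Monotone J},
      ∑ τ : Equiv.Perm (Fin r), PM (J₀.1 ∘ τ) * UQr p N K (J₀.1 ∘ τ)
        = (∑ τ : Equiv.Perm (Fin r), manMu q J₀.1 τ • PM (J₀.1 ∘ τ)) * UQr p N K J₀.1 := by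
    intro J₀
    rw [Finset.sum_mul]
    apply Finset.sum_congr rfl
    intro τ _
    rw [UQr_perm hq hp hN hK J₀.1 τ, mul_smul_comm, smul_mul_assoc]
  rw [stepA, stepB, Finset.smul_sum]
  apply Finset.sum_congr rfl
  intro J₀ _
  rw [stepC J₀]
  show (vmult K : ℂ)⁻¹ • ((vmult J₀.1 : ℂ)⁻¹ •
      ((∑ τ : Equiv.Perm (Fin r), manMu q J₀.1 τ • PM (J₀.1 ∘ τ)) * UQr p N K J₀.1))
    = ((vmult J₀.1 : ℂ)⁻¹ • ∑ τ : Equiv.Perm (Fin r), manMu q J₀.1 τ • PM (J₀.1 ∘ τ))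
        * ((vmult K : ℂ)⁻¹ • UQr p N K J₀.1)
  rw [smul_mul_assoc, mul_smul_comm, smul_smul, smul_smul, mul_comm]
end
end

section
/- Let M be an n×m (q̂,p̂)-Manin matrix and N an m×n (p̂,q̂)-Manin matrix over R such that every entry of M commutes with every entry of N. Then for every k≥0, ∑_I cdet_{q̂}((MN)_{II}) = ∑_J cdet_{p̂}((NM)_{JJ}), where I runs over all increasing multi-indices of size k in {1,…,n} and J over all increasing multi-indices of size k in {1,…,m} (both sides being 0 when k>min(n,m)). Consequently, writing e_k(MN)=∑_I cdet_{q̂}((MN)_{II}) and e_k(NM)=∑_J cdet_{p̂}((NM)_{JJ}), if n≥m the characteristic polynomials char_{q̂}(MN,t)=∑_{k=0}^n(−1)^k e_k(MN) t^{n−k} and char_{p̂}(NM,t)=∑_{k=0}^m(−1)^k e_k(NM) t^{m−k} satisfy char_{q̂}(MN,t) = t^{n−m}·char_{p̂}(NM,t). -/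
open scoped BigOperators Classical

noncomputable section

/-- The `k`-th quantum elementary symmetric function
`e_k(X) = ∑_I cdet_{q̂}(X_{II})`, summed over increasing multi-indices `I` of size `k`. -/
def esum {R : Type*} [Ring R] [Algebra ℂ R] {N : ℕ} (q : Matrix (Fin N) (Fin N) ℂ)
    (X : Matrix (Fin N) (Fin N) R) (k : ℕ) : R :=
  ∑ I : {I : Finset (Fin N) // I.card = k},
    cdet q X ⇑(I.1.orderEmbOfFin I.2) ⇑(I.1.orderEmbOfFin I.2)

namespace CharAux
set_option linter.unusedSectionVars false
set_option linter.unusedVariables false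

variable {R : Type*} [Ring R] [Algebra ℂ R]


lemma adj_swap_lt {r : ℕ} {a b : Fin r} (hb : (b : ℕ) = (a : ℕ) + 1) {u v : Fin r}
    (huv : u < v) (hne : ¬(u = a ∧ v = b)) : Equiv.swap a b u < Equiv.swap a b v := by
  by_cases hua : u = a
  · have hvb : v ≠ b := fun h => hne ⟨hua, h⟩
    subst hua
    have hva : v ≠ u := (ne_of_gt huv)
    rw [Equiv.swap_apply_left, Equiv.swap_apply_of_ne_of_ne hva hvb]
    have h1 : (u : ℕ) < (v : ℕ) := huv
    have h2 : (v : ℕ) ≠ (b : ℕ) := fun h => hvb (Fin.ext h)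
    exact Fin.lt_def.2 (by omega)
  · by_cases hub : u = b
    · subst hub
      have h1 : (u : ℕ) < (v : ℕ) := huv
      have hva : v ≠ a := by intro h; subst h; omega
      have hvb : v ≠ u := (ne_of_gt huv)
      rw [Equiv.swap_apply_right, Equiv.swap_apply_of_ne_of_ne hva hvb]
      exact Fin.lt_def.2 (by omega)
    · rw [Equiv.swap_apply_of_ne_of_ne hua hub]
      by_cases hva : v = a
      · subst hva
        rw [Equiv.swap_apply_left]
        have h1 : (u : ℕ) < (v : ℕ) := huv
        exact Fin.lt_def.2 (by omega)
      · by_cases hvb : v = b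
        · subst hvb
          rw [Equiv.swap_apply_right]
          have h1 : (u : ℕ) < (v : ℕ) := huv
          have h2 : (u : ℕ) ≠ (a : ℕ) := fun h => hua (Fin.ext h)
          exact Fin.lt_def.2 (by omega)
        · rw [Equiv.swap_apply_of_ne_of_ne hva hvb]; exact huv

def invCount {r : ℕ} (π : Equiv.Perm (Fin r)) : ℕ :=
  (Finset.univ.filter (fun st : Fin r × Fin r => st.1 < st.2 ∧ π st.2 < π st.1)).card

lemma erase_filter_eq {r : ℕ} (σ : Equiv.Perm (Fin r)) {a b : Fin r}
    (hb : (b : ℕ) = (a : ℕ) + 1) (h : σ a < σ b) :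
    ((Finset.univ.filter (fun st : Fin r × Fin r =>
        st.1 < st.2 ∧ (σ * Equiv.swap a b) st.2 < (σ * Equiv.swap a b) st.1)).erase (a, b))
      = Finset.image (fun st : Fin r × Fin r => (Equiv.swap a b st.1, Equiv.swap a b st.2))
          (Finset.univ.filter (fun st : Fin r × Fin r => st.1 < st.2 ∧ σ st.2 < σ st.1)) := by
  have hab : a < b := Fin.lt_def.2 (by omega)
  ext st
  simp only [Finset.mem_erase, Finset.mem_filter, Finset.mem_image, Finset.mem_univ, true_and]
  simp only [Equiv.Perm.mul_apply]
  constructor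
  · rintro ⟨hne, h1, h2⟩
    refine ⟨(Equiv.swap a b st.1, Equiv.swap a b st.2), ⟨?_, ?_⟩, ?_⟩
    · apply adj_swap_lt hb h1
      rintro ⟨hsa, hsb⟩
      exact hne (Prod.ext hsa hsb)
    · simpa [Equiv.swap_apply_self] using h2
    · simp [Equiv.swap_apply_self]
  · rintro ⟨st', ⟨h1, h2⟩, rfl⟩
    have hne' : ¬(st'.1 = a ∧ st'.2 = b) := by
      rintro ⟨ha', hb'⟩
      rw [ha', hb'] at h2
      exact absurd h (asymm h2)
    refine ⟨?_, adj_swap_lt hb h1 hne', ?_⟩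
    · intro hEq
      have h1a : Equiv.swap a b st'.1 = a := congrArg Prod.fst hEq
      have h2b : Equiv.swap a b st'.2 = b := congrArg Prod.snd hEq
      have : st'.1 = b := by
        have := congrArg (Equiv.swap a b) h1a
        simpa [Equiv.swap_apply_self, Equiv.swap_apply_left] using this
      have h2' : st'.2 = a := by
        have := congrArg (Equiv.swap a b) h2b
        simpa [Equiv.swap_apply_self, Equiv.swap_apply_right] using this
      rw [this, h2'] at h1
      exact absurd hab (asymm h1)
    · simpa [Equiv.swap_apply_self] using h2

lemma swap_pair_inj {r : ℕ} (a b : Fin r) :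
    Function.Injective (fun st : Fin r × Fin r => (Equiv.swap a b st.1, Equiv.swap a b st.2)) := by
  intro x y hxy
  have h1 := congrArg Prod.fst hxy
  have h2 := congrArg Prod.snd hxy
  simp only at h1 h2
  exact Prod.ext ((Equiv.swap a b).injective h1) ((Equiv.swap a b).injective h2)

lemma mem_swap_filter {r : ℕ} (σ : Equiv.Perm (Fin r)) {a b : Fin r}
    (hb : (b : ℕ) = (a : ℕ) + 1) (h : σ a < σ b) :
    (a, b) ∈ Finset.univ.filter (fun st : Fin r × Fin r =>
      st.1 < st.2 ∧ (σ * Equiv.swap a b) st.2 < (σ * Equiv.swap a b) st.1) := by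
  have hab : a < b := Fin.lt_def.2 (by omega)
  simp only [Finset.mem_filter]
  simp [hab, Equiv.Perm.mul_apply, h]

lemma manEps_mul_adjSwap {n r : ℕ} (q : Matrix (Fin n) (Fin n) ℂ) (I : Fin r → Fin n)
    (σ : Equiv.Perm (Fin r)) {a b : Fin r} (hb : (b : ℕ) = (a : ℕ) + 1) (h : σ a < σ b) :
    manEps q I (σ * Equiv.swap a b) = -q (I (σ b)) (I (σ a)) * manEps q I σ := by
  rw [manEps, ← Finset.mul_prod_erase _ _ (mem_swap_filter σ hb h)]
  congr 1
  · simp [Equiv.Perm.mul_apply]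
  · rw [erase_filter_eq σ hb h, Finset.prod_image (fun x _ y _ hxy => swap_pair_inj a b hxy)]
    rw [manEps]
    refine Finset.prod_congr rfl fun st _ => ?_
    simp [Equiv.Perm.mul_apply, Equiv.swap_apply_self]

lemma invCount_mul_adjSwap {r : ℕ} (σ : Equiv.Perm (Fin r)) {a b : Fin r}
    (hb : (b : ℕ) = (a : ℕ) + 1) (h : σ a < σ b) :
    invCount (σ * Equiv.swap a b) = invCount σ + 1 := by
  rw [invCount, ← Finset.card_erase_add_one (mem_swap_filter σ hb h)]
  congr 1
  rw [erase_filter_eq σ hb h, Finset.card_image_of_injective _ (swap_pair_inj a b), invCount]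

lemma manEps_one {n r : ℕ} (q : Matrix (Fin n) (Fin n) ℂ) (I : Fin r → Fin n) :
    manEps q I 1 = 1 := by
  rw [manEps]
  rw [Finset.filter_false_of_mem, Finset.prod_empty]
  rintro st - ⟨h1, h2⟩
  simp only [Equiv.Perm.one_apply] at h2
  exact absurd h1 (asymm h2)

lemma perm_strictMono_eq_one {r : ℕ} (τ : Equiv.Perm (Fin r)) (h : StrictMono ⇑τ) : τ = 1 := by
  have hwf : WellFoundedLT (Fin r) := inferInstance
  have h2 : StrictMono ⇑τ⁻¹ := by
    intro x y hxy
    have := h.lt_iff_lt (a := τ⁻¹ x) (b := τ⁻¹ y)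
    rw [Equiv.Perm.inv_def, Equiv.apply_symm_apply, Equiv.apply_symm_apply] at this
    exact this.mp hxy
  refine Equiv.ext fun x => le_antisymm ?_ h.le_apply
  have := h2.le_apply (x := τ x)
  rwa [Equiv.Perm.inv_def, Equiv.symm_apply_apply] at this

lemma eq_one_of_no_descent {r : ℕ} (τ : Equiv.Perm (Fin r))
    (h : ∀ a b : Fin r, (b : ℕ) = (a : ℕ) + 1 → ¬ τ b < τ a) : τ = 1 := by
  cases r with
  | zero => exact Subsingleton.elim _ _
  | succ r' =>
    refine perm_strictMono_eq_one τ (Fin.strictMono_iff_lt_succ.mpr fun i => ?_)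
    refine lt_of_le_of_ne (not_lt.mp (h i.castSucc i.succ (by simp))) ?_
    exact τ.injective.ne (Fin.castSucc_lt_succ (i := i)).ne

lemma perm_sum_pair {r : ℕ} {G : Type*} [AddCommMonoid G] {a b : Fin r} (hab : a ≠ b)
    (F : Equiv.Perm (Fin r) → G) :
    ∑ σ : Equiv.Perm (Fin r), F σ
      = ∑ σ ∈ Finset.univ.filter (fun σ : Equiv.Perm (Fin r) => σ a < σ b),
          (F σ + F (σ * Equiv.swap a b)) := by
  rw [Finset.sum_add_distrib]
  rw [← Finset.sum_filter_add_sum_filter_not Finset.univ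
    (fun σ : Equiv.Perm (Fin r) => σ a < σ b) F]
  congr 1
  refine (Finset.sum_nbij' (i := fun σ => σ * Equiv.swap a b) (j := fun σ => σ * Equiv.swap a b)
    ?_ ?_ ?_ ?_ ?_).symm
  · intro σ hσ
    simp only [Finset.mem_filter, Finset.mem_univ, true_and] at hσ ⊢
    simp only [Equiv.Perm.mul_apply, Equiv.swap_apply_left, Equiv.swap_apply_right]
    exact not_lt.mpr hσ.le
  · intro σ hσ
    simp only [Finset.mem_filter, Finset.mem_univ, true_and] at hσ ⊢
    simp only [Equiv.Perm.mul_apply, Equiv.swap_apply_left, Equiv.swap_apply_right]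
    exact lt_of_le_of_ne (not_lt.mp hσ) (σ.injective.ne hab.symm)
  · intro σ _
    show σ * Equiv.swap a b * Equiv.swap a b = σ
    rw [mul_assoc, Equiv.swap_mul_self, mul_one]
  · intro σ _
    show σ * Equiv.swap a b * Equiv.swap a b = σ
    rw [mul_assoc, Equiv.swap_mul_self, mul_one]
  · intro σ _; rfl




/-- noncommutative product splitting -/
lemma ofFn_prod_split {r : ℕ} (g : Fin r → R) (a b : Fin r) (hb : (b : ℕ) = (a : ℕ) + 1) :
    (List.ofFn g).prod
      = ((List.ofFn g).take (a : ℕ)).prod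
          * (g a * g b * ((List.ofFn g).drop ((a : ℕ) + 2)).prod) := by
  have hlen : (List.ofFn g).length = r := List.length_ofFn
  have ha : (a : ℕ) < (List.ofFn g).length := by rw [hlen]; omega
  have ha1 : (a : ℕ) + 1 < (List.ofFn g).length := by rw [hlen]; have := b.2; omega
  conv_lhs => rw [← List.take_append_drop (a : ℕ) (List.ofFn g)]
  rw [List.prod_append]
  congr 1
  rw [List.drop_eq_getElem_cons ha, List.drop_eq_getElem_cons ha1]
  rw [List.prod_cons, List.prod_cons]
  rw [List.getElem_ofFn, List.getElem_ofFn]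
  have e1 : (⟨(a : ℕ), by omega⟩ : Fin r) = a := by exact Fin.ext rfl
  have e2 : (⟨(a : ℕ) + 1, by omega⟩ : Fin r) = b := by exact Fin.ext hb.symm
  rw [e1, e2, mul_assoc]

lemma ofFn_take_congr {r : ℕ} (g h : Fin r → R) (c : ℕ)
    (hgh : ∀ t : Fin r, (t : ℕ) < c → g t = h t) :
    (List.ofFn g).take c = (List.ofFn h).take c := by
  apply List.ext_getElem
  · simp
  · intro i h1 h2
    have hlt : i < c := by simp only [List.length_take, List.length_ofFn] at h1; omega
    simp only [List.getElem_take, List.getElem_ofFn]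
    exact hgh _ hlt

lemma ofFn_drop_congr {r : ℕ} (g h : Fin r → R) (c : ℕ)
    (hgh : ∀ t : Fin r, c ≤ (t : ℕ) → g t = h t) :
    (List.ofFn g).drop c = (List.ofFn h).drop c := by
  apply List.ext_getElem
  · simp
  · intro i h1 h2
    simp only [List.getElem_drop, List.getElem_ofFn]
    exact hgh _ (Nat.le_add_right _ _)

lemma ofFn_prod_update_pair {r : ℕ} (u : Fin r → R) (a b : Fin r) (hb : (b : ℕ) = (a : ℕ) + 1)
    (g : Fin r → R) (hg : ∀ t, t ≠ a → t ≠ b → g t = u t) :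
    (List.ofFn g).prod
      = ((List.ofFn u).take (a : ℕ)).prod
          * (g a * g b * ((List.ofFn u).drop ((a : ℕ) + 2)).prod) := by
  rw [ofFn_prod_split g a b hb]
  rw [ofFn_take_congr g u (a : ℕ) (fun t ht => hg t (fun hEq => by subst hEq; omega)
    (fun hEq => by subst hEq; omega))]
  rw [ofFn_drop_congr g u ((a : ℕ) + 2) (fun t ht => hg t (fun hEq => by subst hEq; omega)
    (fun hEq => by subst hEq; omega))]

lemma smul_sandwich (c : ℂ) (P x S : R) : c • (P * (x * S)) = P * (c • x * S) := by
  rw [smul_mul_assoc, mul_smul_comm]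

/-- the key quadratic-algebra identity -/
lemma manin_T {n m : ℕ} {q : Matrix (Fin n) (Fin n) ℂ} {p : Matrix (Fin m) (Fin m) ℂ}
    (hq : IsParametric q) (hp : IsParametric p)
    {M : Matrix (Fin n) (Fin m) R} (hM : IsManin q p M)
    {A B : Fin n} (hAB : A < B) (k l : Fin m) :
    M A l * M B k - q B A • (M B l * M A k)
      = (-(p l k)) • (M A k * M B l - q B A • (M B k * M A l)) := by
  rcases lt_trichotomy k l with hkl | hkl | hkl
  · have h := hM.2 A B k l hAB hkl
    have hXY : (M A k * M B l - q B A • (M B k * M A l))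
        + p k l • (M A l * M B k - q B A • (M B l * M A k)) = 0 := by
      rw [smul_sub, smul_smul]
      rw [mul_comm (p k l) (q B A)]
      abel_nf
      abel_nf at h
      convert h using 2
      abel
    have hX : M A k * M B l - q B A • (M B k * M A l)
        = -(p k l • (M A l * M B k - q B A • (M B l * M A k))) :=
      eq_neg_of_add_eq_zero_left hXY
    rw [hX, smul_neg, neg_smul, neg_neg, smul_smul, mul_comm (p l k) (p k l), hp.2.1 k l,
      one_smul]
  · subst hkl
    have h0 : M A k * M B k - q B A • (M B k * M A k) = 0 := by
      rw [hM.1 A B k hAB, sub_self]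
    rw [h0, smul_zero]
  · have h := hM.2 A B l k hAB hkl
    have hXY : (M A l * M B k - q B A • (M B l * M A k))
        + p l k • (M A k * M B l - q B A • (M B k * M A l)) = 0 := by
      rw [smul_sub, smul_smul]
      rw [mul_comm (p l k) (q B A)]
      abel_nf
      abel_nf at h
      convert h using 2
      abel
    rw [eq_neg_of_add_eq_zero_left hXY, neg_smul]

lemma ofFn_prod_expand_sum {r m' : ℕ} (g : Fin r → Fin m' → R) :
    (List.ofFn fun t => ∑ j : Fin m', g t j).prod
      = ∑ J : Fin r → Fin m', (List.ofFn fun t => g t (J t)).prod := by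
  induction r with
  | zero =>
    simp [List.ofFn_zero]
  | succ r ih =>
    rw [List.ofFn_succ, List.prod_cons, ih (g := fun t j => g t.succ j)]
    rw [Finset.sum_mul_sum]
    rw [← (Fin.consEquiv (fun _ : Fin (r + 1) => Fin m')).sum_comp
      (fun J : Fin (r + 1) → Fin m' => (List.ofFn fun t => g t (J t)).prod)]
    rw [Fintype.sum_prod_type]
    refine Finset.sum_congr rfl fun j _ => Finset.sum_congr rfl fun J _ => ?_
    rw [List.ofFn_succ, List.prod_cons]
    simp only [Fin.consEquiv_apply, Fin.cons_zero, Fin.cons_succ]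

lemma ofFn_prod_mul {r : ℕ} (f g : Fin r → R) (h : ∀ s t : Fin r, Commute (g s) (f t)) :
    (List.ofFn fun t => f t * g t).prod = (List.ofFn f).prod * (List.ofFn g).prod := by
  induction r with
  | zero => simp
  | succ r ih =>
    rw [List.ofFn_succ, List.ofFn_succ, List.ofFn_succ, List.prod_cons, List.prod_cons,
      List.prod_cons, ih _ _ (fun s t => h s.succ t.succ)]
    have hc : Commute (g 0) (List.ofFn fun t : Fin r => f t.succ).prod := by
      apply Commute.list_prod_right
      intro x hx
      rw [List.mem_ofFn] at hx
      obtain ⟨i, rfl⟩ := hx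
      exact h 0 i.succ
    calc f 0 * g 0 * ((List.ofFn fun t : Fin r => f t.succ).prod
          * (List.ofFn fun t : Fin r => g t.succ).prod)
        = f 0 * (g 0 * (List.ofFn fun t : Fin r => f t.succ).prod)
            * (List.ofFn fun t : Fin r => g t.succ).prod := by
          rw [mul_assoc, mul_assoc, mul_assoc]
      _ = f 0 * ((List.ofFn fun t : Fin r => f t.succ).prod * g 0)
            * (List.ofFn fun t : Fin r => g t.succ).prod := by rw [hc.eq]
      _ = f 0 * (List.ofFn fun t : Fin r => f t.succ).prod
            * (g 0 * (List.ofFn fun t : Fin r => g t.succ).prod) := by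
          rw [mul_assoc, mul_assoc, mul_assoc]


lemma cdet_comp_adjSwap {n m : ℕ}
    (q : Matrix (Fin n) (Fin n) ℂ) (p : Matrix (Fin m) (Fin m) ℂ)
    (hq : IsParametric q) (hp : IsParametric p)
    (M : Matrix (Fin n) (Fin m) R) (hM : IsManin q p M)
    {r : ℕ} {I : Fin r → Fin n} (hI : StrictMono I) (J : Fin r → Fin m)
    {a b : Fin r} (hb : (b : ℕ) = (a : ℕ) + 1) :
    cdet q M I (J ∘ ⇑(Equiv.swap a b)) = (-(p (J b) (J a))) • cdet q M I J := by
  have hab : a ≠ b := by intro h; rw [h] at hb; omega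
  rw [cdet, cdet, Finset.smul_sum]
  rw [perm_sum_pair hab (F := fun σ => manEps q I σ •
    (List.ofFn fun t : Fin r => M (I (σ t)) ((J ∘ ⇑(Equiv.swap a b)) t)).prod)]
  rw [perm_sum_pair hab (F := fun σ => (-(p (J b) (J a))) • (manEps q I σ •
    (List.ofFn fun t : Fin r => M (I (σ t)) (J t)).prod))]
  refine Finset.sum_congr rfl fun σ hσmem => ?_
  have hσ : σ a < σ b := (Finset.mem_filter.mp hσmem).2
  have hAB : I (σ a) < I (σ b) := hI hσ
  rw [manEps_mul_adjSwap q I σ hb hσ]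
  have e1 := ofFn_prod_update_pair (fun t => M (I (σ t)) (J t)) a b hb
      (fun t : Fin r => M (I (σ t)) ((J ∘ ⇑(Equiv.swap a b)) t))
      (fun t ht1 ht2 => by
        simp only [Function.comp_apply, Equiv.swap_apply_of_ne_of_ne ht1 ht2])
  have e2 := ofFn_prod_update_pair (fun t => M (I (σ t)) (J t)) a b hb
      (fun t : Fin r => M (I ((σ * Equiv.swap a b) t)) ((J ∘ ⇑(Equiv.swap a b)) t))
      (fun t ht1 ht2 => by
        simp only [Function.comp_apply, Equiv.Perm.mul_apply,
          Equiv.swap_apply_of_ne_of_ne ht1 ht2])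
  have e3 := ofFn_prod_update_pair (fun t => M (I (σ t)) (J t)) a b hb
      (fun t : Fin r => M (I (σ t)) (J t)) (fun t _ _ => rfl)
  have e4 := ofFn_prod_update_pair (fun t => M (I (σ t)) (J t)) a b hb
      (fun t : Fin r => M (I ((σ * Equiv.swap a b) t)) (J t))
      (fun t ht1 ht2 => by
        simp only [Equiv.Perm.mul_apply, Equiv.swap_apply_of_ne_of_ne ht1 ht2])
  rw [e1, e2, e3, e4]
  simp only [Function.comp_apply, Equiv.Perm.mul_apply, Equiv.swap_apply_left,
    Equiv.swap_apply_right]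
  rw [smul_smul, smul_smul]
  simp only [smul_sandwich]
  rw [← mul_add, ← mul_add, ← add_mul, ← add_mul]
  have hT := manin_T hq hp hM hAB (J a) (J b)
  congr 2
  linear_combination (norm := module) manEps q I σ • hT

lemma cdet_eq_zero_of_repeat {n m : ℕ}
    (q : Matrix (Fin n) (Fin n) ℂ) (p : Matrix (Fin m) (Fin m) ℂ)
    (hq : IsParametric q) (hp : IsParametric p)
    (M : Matrix (Fin n) (Fin m) R) (hM : IsManin q p M)
    {r : ℕ} {I : Fin r → Fin n} (hI : StrictMono I) :
    ∀ (d : ℕ) (J : Fin r → Fin m) (s t : Fin r), s < t → (t : ℕ) - (s : ℕ) ≤ d →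
      J s = J t → cdet q M I J = 0 := by
  intro d
  induction d with
  | zero =>
    intro J s t hst hle _
    have := Fin.lt_def.1 hst
    omega
  | succ d ih =>
    intro J s t hst hle hJ
    have hst' := Fin.lt_def.1 hst
    by_cases hadj : (t : ℕ) = (s : ℕ) + 1
    · have hswap : J ∘ ⇑(Equiv.swap s t) = J := by
        funext x
        rcases eq_or_ne x s with rfl | hxs
        · simp only [Function.comp_apply, Equiv.swap_apply_left]; exact hJ.symm
        · rcases eq_or_ne x t with rfl | hxt
          · simp only [Function.comp_apply, Equiv.swap_apply_right]; exact hJ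
          · simp only [Function.comp_apply, Equiv.swap_apply_of_ne_of_ne hxs hxt]
      have h := cdet_comp_adjSwap q p hq hp M hM hI J (a := s) (b := t) hadj
      rw [hswap, ← hJ, hp.2.2 (J s)] at h
      have h2 : (2 : ℂ) • cdet q M I J = 0 := by
        rw [two_smul]
        nth_rewrite 2 [h]
        simp
      have h3 := congrArg (fun z : R => (2⁻¹ : ℂ) • z) h2
      simpa [smul_smul] using h3
    · have hbr : ((s : ℕ) + 1) < r := by have := t.2; omega
      have hbs : ((⟨(s : ℕ) + 1, hbr⟩ : Fin r) : ℕ) = (s : ℕ) + 1 := rfl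
      set b : Fin r := ⟨(s : ℕ) + 1, hbr⟩ with hbdef
      have htb : t ≠ b := by
        intro hEq
        rw [hEq] at hadj
        exact hadj rfl
      have hts : t ≠ s := hst.ne'
      have hzero : cdet q M I (J ∘ ⇑(Equiv.swap s b)) = 0 := by
        apply ih (J ∘ ⇑(Equiv.swap s b)) b t (Fin.lt_def.2 (by omega)) (by omega)
        show J (Equiv.swap s b b) = J (Equiv.swap s b t)
        rw [Equiv.swap_apply_right, Equiv.swap_apply_of_ne_of_ne hts htb]
        exact hJ
      have h := cdet_comp_adjSwap q p hq hp M hM hI (J ∘ ⇑(Equiv.swap s b))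
        (a := s) (b := b) hbs
      have hcomp : (J ∘ ⇑(Equiv.swap s b)) ∘ ⇑(Equiv.swap s b) = J := by
        funext x
        simp [Equiv.swap_apply_self]
      rw [hcomp, hzero, smul_zero] at h
      exact h

lemma cdet_eq_zero_of_not_inj {n m : ℕ}
    (q : Matrix (Fin n) (Fin n) ℂ) (p : Matrix (Fin m) (Fin m) ℂ)
    (hq : IsParametric q) (hp : IsParametric p)
    (M : Matrix (Fin n) (Fin m) R) (hM : IsManin q p M)
    {r : ℕ} {I : Fin r → Fin n} (hI : StrictMono I) (J : Fin r → Fin m)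
    (hJ : ¬ Function.Injective J) : cdet q M I J = 0 := by
  rw [Function.not_injective_iff] at hJ
  obtain ⟨s, t, hJst, hst⟩ := hJ
  rcases hst.lt_or_gt with h | h
  · exact cdet_eq_zero_of_repeat q p hq hp M hM hI ((t : ℕ) - (s : ℕ)) J s t h le_rfl hJst
  · exact cdet_eq_zero_of_repeat q p hq hp M hM hI ((s : ℕ) - (t : ℕ)) J t s h le_rfl hJst.symm

lemma cdet_comp_perm {n m : ℕ}
    (q : Matrix (Fin n) (Fin n) ℂ) (p : Matrix (Fin m) (Fin m) ℂ)
    (hq : IsParametric q) (hp : IsParametric p)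
    (M : Matrix (Fin n) (Fin m) R) (hM : IsManin q p M)
    {r : ℕ} {I : Fin r → Fin n} (hI : StrictMono I) (J : Fin r → Fin m)
    (τ : Equiv.Perm (Fin r)) :
    cdet q M I (J ∘ ⇑τ) = manEps p J τ • cdet q M I J := by
  suffices H : ∀ (c : ℕ) (τ : Equiv.Perm (Fin r)), invCount τ ≤ c →
      cdet q M I (J ∘ ⇑τ) = manEps p J τ • cdet q M I J from H (invCount τ) τ le_rfl
  intro c
  induction c with
  | zero =>
    intro τ hτ
    by_cases hdesc : ∃ a b : Fin r, (b : ℕ) = (a : ℕ) + 1 ∧ τ b < τ a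
    · obtain ⟨a, b, hb, hba⟩ := hdesc
      exfalso
      set σ := τ * Equiv.swap a b with hσdef
      have hτσ : σ * Equiv.swap a b = τ := by
        rw [hσdef, mul_assoc, Equiv.swap_mul_self, mul_one]
      have hσab : σ a < σ b := by
        simpa [hσdef, Equiv.Perm.mul_apply, Equiv.swap_apply_left, Equiv.swap_apply_right]
          using hba
      have hcnt := invCount_mul_adjSwap σ hb hσab
      rw [hτσ] at hcnt
      omega
    · push_neg at hdesc
      have hτ1 : τ = 1 := eq_one_of_no_descent τ (fun a b h1 => not_lt.mpr (hdesc a b h1))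
      subst hτ1
      simp only [Equiv.Perm.coe_one, Function.comp_id, manEps_one, one_smul]
  | succ c ih =>
    intro τ hτ
    by_cases hdesc : ∃ a b : Fin r, (b : ℕ) = (a : ℕ) + 1 ∧ τ b < τ a
    · obtain ⟨a, b, hb, hba⟩ := hdesc
      set σ := τ * Equiv.swap a b with hσdef
      have hτσ : σ * Equiv.swap a b = τ := by
        rw [hσdef, mul_assoc, Equiv.swap_mul_self, mul_one]
      have hσab : σ a < σ b := by
        simpa [hσdef, Equiv.Perm.mul_apply, Equiv.swap_apply_left, Equiv.swap_apply_right]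
          using hba
      have hcount : invCount τ = invCount σ + 1 := by
        rw [← hτσ]; exact invCount_mul_adjSwap σ hb hσab
      have hJτ : J ∘ ⇑τ = (J ∘ ⇑σ) ∘ ⇑(Equiv.swap a b) := by
        funext x
        simp only [Function.comp_apply]
        rw [← hτσ]
        rfl
      rw [hJτ, cdet_comp_adjSwap q p hq hp M hM hI (J ∘ ⇑σ) hb, ih σ (by omega), smul_smul]
      congr 1
      rw [← hτσ, manEps_mul_adjSwap p J σ hb hσab]
      rfl
    · push_neg at hdesc
      have hτ1 : τ = 1 := eq_one_of_no_descent τ (fun a b h1 => not_lt.mpr (hdesc a b h1))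
      subst hτ1
      simp only [Equiv.Perm.coe_one, Function.comp_id, manEps_one, one_smul]

lemma commute_cdet {n m n' m' : ℕ}
    (q : Matrix (Fin n) (Fin n) ℂ) (p : Matrix (Fin m') (Fin m') ℂ)
    (M : Matrix (Fin n) (Fin m) R) (N : Matrix (Fin m') (Fin n') R)
    (hcomm : ∀ i j k l, Commute (M i j) (N k l))
    {r r' : ℕ} (I : Fin r → Fin n) (J : Fin r → Fin m)
    (J' : Fin r' → Fin m') (I' : Fin r' → Fin n') :
    Commute (cdet q M I J) (cdet p N J' I') := by
  rw [cdet, cdet]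
  show _ * _ = _ * _
  rw [Finset.sum_mul_sum, Finset.sum_mul_sum, Finset.sum_comm]
  refine Finset.sum_congr rfl fun τ _ => Finset.sum_congr rfl fun σ _ => ?_
  have hPP : Commute ((List.ofFn fun t : Fin r => M (I (σ t)) (J t)).prod)
      ((List.ofFn fun t : Fin r' => N (J' (τ t)) (I' t)).prod) := by
    apply Commute.list_prod_right
    intro y hy
    rw [List.mem_ofFn] at hy
    obtain ⟨t2, rfl⟩ := hy
    apply Commute.list_prod_left
    intro x hx
    rw [List.mem_ofFn] at hx
    obtain ⟨t1, rfl⟩ := hx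
    exact hcomm _ _ _ _
  exact ((hPP.smul_left (manEps q I σ)).smul_right (manEps p J' τ)).eq

lemma cdet_mul_apply {n m : ℕ} (q : Matrix (Fin n) (Fin n) ℂ)
    (M : Matrix (Fin n) (Fin m) R) (N : Matrix (Fin m) (Fin n) R)
    (hcomm : ∀ i j k l, Commute (M i j) (N k l))
    {r : ℕ} (I : Fin r → Fin n) :
    cdet q (M * N) I I = ∑ J : Fin r → Fin m,
      cdet q M I J * (List.ofFn fun t => N (J t) (I t)).prod := by
  rw [cdet]
  have hexp : ∀ σ : Equiv.Perm (Fin r),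
      (List.ofFn fun t : Fin r => (M * N) (I (σ t)) (I t)).prod
        = ∑ J : Fin r → Fin m, (List.ofFn fun t => M (I (σ t)) (J t)).prod
            * (List.ofFn fun t => N (J t) (I t)).prod := by
    intro σ
    have h1 : (fun t : Fin r => (M * N) (I (σ t)) (I t))
        = fun t => ∑ j : Fin m, M (I (σ t)) j * N j (I t) := by
      funext t; rw [Matrix.mul_apply]
    rw [h1, ofFn_prod_expand_sum (g := fun t j => M (I (σ t)) j * N j (I t))]
    refine Finset.sum_congr rfl fun J _ => ?_
    exact ofFn_prod_mul _ _ (fun s t => (hcomm _ _ _ _).symm)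
  simp only [hexp, Finset.smul_sum]
  rw [Finset.sum_comm]
  refine Finset.sum_congr rfl fun J _ => ?_
  rw [cdet, Finset.sum_mul]
  refine Finset.sum_congr rfl fun σ _ => ?_
  rw [smul_mul_assoc]

lemma image_emb_comp {m' r : ℕ} (S : Finset (Fin m')) (hS : S.card = r) (τ : Equiv.Perm (Fin r)) :
    Finset.image (⇑(S.orderEmbOfFin hS) ∘ ⇑τ) Finset.univ = S := by
  have h1 : Finset.image (⇑(S.orderEmbOfFin hS) ∘ ⇑τ) Finset.univ ⊆ S := by
    intro x hx
    simp only [Finset.mem_image] at hx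
    obtain ⟨y, _, rfl⟩ := hx
    exact S.orderEmbOfFin_mem hS _
  refine Finset.eq_of_subset_of_card_le h1 ?_
  rw [Finset.card_image_of_injective _ ((S.orderEmbOfFin hS).injective.comp τ.injective)]
  rw [Finset.card_univ, Fintype.card_fin, hS]

lemma sum_inj_functions {G : Type*} [AddCommMonoid G] {r m' : ℕ}
    (f : (Fin r → Fin m') → G)
    (hzero : ∀ J : Fin r → Fin m', ¬ Function.Injective J → f J = 0) :
    ∑ J : Fin r → Fin m', f J
      = ∑ S : {S : Finset (Fin m') // S.card = r}, ∑ τ : Equiv.Perm (Fin r),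
          f (⇑(S.1.orderEmbOfFin S.2) ∘ ⇑τ) := by
  have h2 : ∑ x : {S : Finset (Fin m') // S.card = r} × Equiv.Perm (Fin r),
      f (⇑(x.1.1.orderEmbOfFin x.1.2) ∘ ⇑x.2)
      = ∑ S : {S : Finset (Fin m') // S.card = r}, ∑ τ : Equiv.Perm (Fin r),
          f (⇑(S.1.orderEmbOfFin S.2) ∘ ⇑τ) :=
    Fintype.sum_prod_type
      (f := fun x : {S : Finset (Fin m') // S.card = r} × Equiv.Perm (Fin r) =>
        f (⇑(x.1.1.orderEmbOfFin x.1.2) ∘ ⇑x.2))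
  rw [← h2]
  have h1 : ∑ J : Fin r → Fin m', f J
      = ∑ J ∈ Finset.univ.filter (fun J : Fin r → Fin m' => Function.Injective J), f J := by
    refine (Finset.sum_subset (Finset.filter_subset _ _) ?_).symm
    intro J _ hJ
    exact hzero J (by simpa using hJ)
  rw [h1]
  refine (Finset.sum_bij
    (i := fun (x : {S : Finset (Fin m') // S.card = r} × Equiv.Perm (Fin r)) _ =>
      ⇑(x.1.1.orderEmbOfFin x.1.2) ∘ ⇑x.2) ?_ ?_ ?_ ?_).symm
  · intro x _
    simp only [Finset.mem_filter, Finset.mem_univ, true_and]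
    exact (x.1.1.orderEmbOfFin x.1.2).injective.comp x.2.injective
  · rintro ⟨⟨S1, hS1⟩, τ1⟩ hm1 ⟨⟨S2, hS2⟩, τ2⟩ hm2 hEq2
    have hS : S1 = S2 := by
      have h2 := congrArg (fun g => Finset.image g Finset.univ) hEq2
      simpa only [image_emb_comp] using h2
    subst hS
    simp only [Prod.mk.injEq, Subtype.mk.injEq]
    exact ⟨trivial, Equiv.ext fun t => (S1.orderEmbOfFin hS1).injective (congrFun hEq2 t)⟩
  · intro J hJ
    have hinj : Function.Injective J := by simpa using hJ
    have hScard : (Finset.image J Finset.univ).card = r := by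
      rw [Finset.card_image_of_injective _ hinj, Finset.card_univ, Fintype.card_fin]
    have hmem : ∀ x : Fin r, J x ∈ Finset.image J Finset.univ :=
      fun x => Finset.mem_image_of_mem J (Finset.mem_univ x)
    have hg : Function.Injective (fun x : Fin r =>
        ((Finset.image J Finset.univ).orderIsoOfFin hScard).symm ⟨J x, hmem x⟩) := by
      intro x y hxy
      simp only at hxy
      have h3 := congrArg
        (fun z => (((Finset.image J Finset.univ).orderIsoOfFin hScard) z : Fin m')) hxy
      simp only [OrderIso.apply_symm_apply] at h3
      exact hinj h3
    refine ⟨⟨⟨Finset.image J Finset.univ, hScard⟩,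
      Equiv.ofBijective _ (Finite.injective_iff_bijective.mp hg)⟩, Finset.mem_univ _, ?_⟩
    funext x
    show (Finset.image J Finset.univ).orderEmbOfFin hScard
        (((Finset.image J Finset.univ).orderIsoOfFin hScard).symm ⟨J x, hmem x⟩) = J x
    rw [← Finset.coe_orderIsoOfFin_apply]
    simp only [OrderIso.apply_symm_apply]
  · intro x _
    rfl

lemma cdet_mul_eq {n m : ℕ}
    (q : Matrix (Fin n) (Fin n) ℂ) (p : Matrix (Fin m) (Fin m) ℂ)
    (hq : IsParametric q) (hp : IsParametric p)
    (M : Matrix (Fin n) (Fin m) R) (hM : IsManin q p M)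
    (N : Matrix (Fin m) (Fin n) R)
    (hcomm : ∀ i j k l, Commute (M i j) (N k l))
    {r : ℕ} {I : Fin r → Fin n} (hI : StrictMono I) :
    cdet q (M * N) I I = ∑ T : {T : Finset (Fin m) // T.card = r},
      cdet q M I ⇑(T.1.orderEmbOfFin T.2) * cdet p N ⇑(T.1.orderEmbOfFin T.2) I := by
  rw [cdet_mul_apply q M N hcomm I]
  rw [sum_inj_functions (f := fun J : Fin r → Fin m =>
    cdet q M I J * (List.ofFn fun t => N (J t) (I t)).prod)
    (fun J hJ => by
      show cdet q M I J * (List.ofFn fun t => N (J t) (I t)).prod = 0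
      rw [cdet_eq_zero_of_not_inj q p hq hp M hM hI J hJ, zero_mul])]
  refine Finset.sum_congr rfl fun T _ => ?_
  have step : ∀ τ : Equiv.Perm (Fin r),
      cdet q M I (⇑(T.1.orderEmbOfFin T.2) ∘ ⇑τ)
          * (List.ofFn fun t => N ((⇑(T.1.orderEmbOfFin T.2) ∘ ⇑τ) t) (I t)).prod
        = cdet q M I ⇑(T.1.orderEmbOfFin T.2)
          * (manEps p ⇑(T.1.orderEmbOfFin T.2) τ
            • (List.ofFn fun t => N ((⇑(T.1.orderEmbOfFin T.2) ∘ ⇑τ) t) (I t)).prod) := by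
    intro τ
    rw [cdet_comp_perm q p hq hp M hM hI _ τ, smul_mul_assoc, ← mul_smul_comm]
  simp only [step]
  rw [← Finset.mul_sum]
  congr 1

lemma esum_mul_eq {n m : ℕ}
    (q : Matrix (Fin n) (Fin n) ℂ) (p : Matrix (Fin m) (Fin m) ℂ)
    (hq : IsParametric q) (hp : IsParametric p)
    (M : Matrix (Fin n) (Fin m) R) (hM : IsManin q p M)
    (N : Matrix (Fin m) (Fin n) R)
    (hcomm : ∀ i j k l, Commute (M i j) (N k l)) (k : ℕ) :
    esum q (M * N) k
      = ∑ S : {S : Finset (Fin n) // S.card = k}, ∑ T : {T : Finset (Fin m) // T.card = k},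
          cdet q M ⇑(S.1.orderEmbOfFin S.2) ⇑(T.1.orderEmbOfFin T.2)
            * cdet p N ⇑(T.1.orderEmbOfFin T.2) ⇑(S.1.orderEmbOfFin S.2) := by
  rw [esum]
  exact Finset.sum_congr rfl fun S _ => cdet_mul_eq q p hq hp M hM N hcomm
    ((S.1.orderEmbOfFin S.2).strictMono)

end CharAux

/-- For `M` an `n×m` `(q̂,p̂)`-Manin matrix and `N` an `m×n` `(p̂,q̂)`-Manin matrix with
mutually commuting entries, `e_k(MN) = e_k(NM)` for all `k`, and consequently if `m ≤ n`
the characteristic polynomials satisfy `char_{q̂}(MN,t) = t^{n-m} char_{p̂}(NM,t)`. -/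
theorem char_poly_MN_NM {R : Type*} [Ring R] [Algebra ℂ R] {n m : ℕ}
    (q : Matrix (Fin n) (Fin n) ℂ) (p : Matrix (Fin m) (Fin m) ℂ)
    (hq : IsParametric q) (hp : IsParametric p)
    (M : Matrix (Fin n) (Fin m) R) (hM : IsManin q p M)
    (N : Matrix (Fin m) (Fin n) R) (hN : IsManin p q N)
    (hcomm : ∀ (i : Fin n) (j : Fin m) (k : Fin m) (l : Fin n),
      Commute (M i j) (N k l)) :
    (∀ k : ℕ, esum q (M * N) k = esum p (N * M) k) ∧
    (m ≤ n →
      ∑ k ∈ Finset.range (n + 1), ((-1 : ℤ)) ^ k •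
          (Polynomial.C (esum q (M * N) k) * Polynomial.X ^ (n - k))
        = Polynomial.X ^ (n - m) *
            ∑ k ∈ Finset.range (m + 1), ((-1 : ℤ)) ^ k •
              (Polynomial.C (esum p (N * M) k) * Polynomial.X ^ (m - k))) := by
  have part1 : ∀ k : ℕ, esum q (M * N) k = esum p (N * M) k := by
    intro k
    rw [CharAux.esum_mul_eq q p hq hp M hM N hcomm k,
      CharAux.esum_mul_eq p q hp hq N hN M (fun i j k' l => (hcomm k' l i j).symm) k]
    rw [Finset.sum_comm]
    refine Finset.sum_congr rfl fun T _ => Finset.sum_congr rfl fun S _ => ?_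
    exact (CharAux.commute_cdet q p M N hcomm _ _ _ _).eq
  refine ⟨part1, fun hmn => ?_⟩
  have hz : ∀ k : ℕ, m < k → esum q (M * N) k = 0 := by
    intro k hk
    rw [part1 k]
    have hE : IsEmpty {T : Finset (Fin m) // T.card = k} := by
      constructor
      rintro ⟨T, hT⟩
      have h1 : T.card ≤ m := by
        have h2 := T.card_le_univ
        simpa using h2
      omega
    rw [esum, Finset.univ_eq_empty, Finset.sum_empty]
  have hsub : Finset.range (m + 1) ⊆ Finset.range (n + 1) := by
    intro x hx
    simp only [Finset.mem_range] at hx ⊢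
    omega
  have hvan : ∀ k ∈ Finset.range (n + 1), k ∉ Finset.range (m + 1) →
      ((-1 : ℤ)) ^ k • (Polynomial.C (esum q (M * N) k) * Polynomial.X ^ (n - k))
        = (0 : Polynomial R) := by
    intro k _ hk2
    simp only [Finset.mem_range, not_lt] at hk2
    rw [hz k (by omega)]
    simp
  rw [← Finset.sum_subset hsub hvan]
  rw [Finset.mul_sum]
  refine Finset.sum_congr rfl fun k hk => ?_
  simp only [Finset.mem_range] at hk
  rw [← part1 k, mul_smul_comm]
  congr 1
  rw [← mul_assoc, Polynomial.X_pow_mul, mul_assoc, ← pow_add]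
  have hnk : n - m + (m - k) = n - k := by omega
  rw [hnk]
end
end
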